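/- Let t > 2, G = D_{4t} = ⟨a, b : a^{2t} = b² = 1, bab = a^{−1}⟩ indexed by g_k = a^{k−1} (1 ≤ k ≤ 2t) and g_k = a^{k−2t−1}b (2t+1 ≤ k ≤ 4t), ρ the ±1 function whose matrix is the block matrix [[A,A],[B,−B]] with A_{i,j} = 1 iff i+j ≤ 2t+1 and B_{i,j} = 1 iff j ≤ i (for 1 ≤ i,j ≤ 2t), and S = G ∖ {1, a^{2t−2}b, a^{2t−1}b}. Let J ⊆ ℚ[x_d : d ∈ S] be the ideal generated by x_d² − x_d for d ∈ S together with, for each s ∈ {2,…,t}, the polynomial Σ_{h∈G} ρ(g_s,h) · ∏_{d ∈ S ∩ {h, g_s·h}} (1 − 2x_d). Then the number of tuples (x_d)_{d∈S} ∈ {0,1}^S for which the cocyclic matrix of ψ(g,h) = ρ(g,h)·∏_{d∈S} ∂_d(g,h)^{x_d} is Hadamard equals the dimension of ℚ[x_d : d ∈ S]/J as a ℚ-vector space. -/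

import Mathlib

open Matrix MvPolynomial

/-- The characteristic map `δ_d`. -/
def charMap {G : Type*} [DecidableEq G] (d x : G) : ℤ := if x = d then -1 else 1

/-- The elementary coboundary `∂_d`. -/
def elemCob {G : Type*} [Group G] [DecidableEq G] (d g h : G) : ℤ :=
  charMap d g * charMap d h * charMap d (g * h)

/-- The ordering `g_k` of `D_{4t}`: `g_k = a^{k-1}` for `1 ≤ k ≤ 2t` and
`g_k = a^{k-2t-1}·b` for `2t+1 ≤ k ≤ 4t`, where `a = r 1` and `b = sr 0`. -/
def dihEl (t k : ℕ) : DihedralGroup (2 * t) :=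
  if k ≤ 2 * t then DihedralGroup.r ((k - 1 : ℕ) : ZMod (2 * t))
  else DihedralGroup.r ((k - 2 * t - 1 : ℕ) : ZMod (2 * t)) * DihedralGroup.sr 0

/-- The index `k ∈ {1,…,4t}` of a dihedral group element in the above ordering
(`a^m = r m` has index `m+1`; `a^m·b = sr (-m)` has index `2t+m+1`). -/
def dihIdx {t : ℕ} : DihedralGroup (2 * t) → ℕ
  | DihedralGroup.r i => i.val + 1
  | DihedralGroup.sr j => 2 * t + (-j).val + 1

/-- The entries of the block matrix `[[A,A],[B,−B]]`, where `A_{i,j} = 1` iff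
`i+j ≤ 2t+1` and `B_{i,j} = 1` iff `j ≤ i`, read through the indexing of `D_{4t}`. -/
def rhoIdxD (t i j : ℕ) : ℤ :=
  if i ≤ 2 * t then
    (if j ≤ 2 * t then (if i + j ≤ 2 * t + 1 then 1 else -1)
     else (if i + (j - 2 * t) ≤ 2 * t + 1 then 1 else -1))
  else
    (if j ≤ 2 * t then (if j ≤ i - 2 * t then 1 else -1)
     else (if j ≤ i then -1 else 1))

/-- The fixed representative cocycle `ρ = β₂·β₃` over `D_{4t}`. -/
def rhoD (t : ℕ) (g h : DihedralGroup (2 * t)) : ℤ := rhoIdxD t (dihIdx g) (dihIdx h)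

/-- The coboundary index set `S = G ∖ {1, a^{2t−2}b, a^{2t−1}b}`. -/
def SD (t : ℕ) [NeZero (2 * t)] : Finset (DihedralGroup (2 * t)) :=
  Finset.univ \ {(1 : DihedralGroup (2 * t)),
    DihedralGroup.r ((2 * t - 2 : ℕ) : ZMod (2 * t)) * DihedralGroup.sr 0,
    DihedralGroup.r ((2 * t - 1 : ℕ) : ZMod (2 * t)) * DihedralGroup.sr 0}

/-- The row polynomial `Σ_{h∈G} ρ(g_s,h) · ∏_{d ∈ S ∩ {h, g_s·h}} (1 - 2x_d)`. -/
noncomputable def rowPolyD (t : ℕ) [NeZero (2 * t)] (s : ℕ) :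
    MvPolynomial {d : DihedralGroup (2 * t) // d ∈ SD t} ℚ :=
  ∑ h : DihedralGroup (2 * t), MvPolynomial.C ((rhoD t (dihEl t s) h : ℤ) : ℚ) *
    ∏ d : {d : DihedralGroup (2 * t) // d ∈ SD t},
      if (d : DihedralGroup (2 * t)) = h ∨ (d : DihedralGroup (2 * t)) = dihEl t s * h then
        (1 - 2 * MvPolynomial.X d) else 1

/-- The ideal `J_{D_{4t}}` of Theorem 5. -/
noncomputable def idealD (t : ℕ) [NeZero (2 * t)] :
    Ideal (MvPolynomial {d : DihedralGroup (2 * t) // d ∈ SD t} ℚ) :=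
  Ideal.span
    ({p | ∃ d : {d : DihedralGroup (2 * t) // d ∈ SD t},
        p = MvPolynomial.X d ^ 2 - MvPolynomial.X d} ∪
     {p | ∃ s : ℕ, 2 ≤ s ∧ s ≤ t ∧ p = rowPolyD t s})



open DihedralGroup

section MyAux

variable {t : ℕ} [NeZero (2*t)]

lemma val_add' (x y : ZMod (2*t)) :
    (x + y).val = if x.val + y.val < 2*t then x.val + y.val else x.val + y.val - (2*t) := by
  have hx := ZMod.val_lt x
  have hy := ZMod.val_lt y
  rw [ZMod.val_add]
  split_ifs with h
  · exact Nat.mod_eq_of_lt h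
  · rw [Nat.mod_eq_sub_mod (by omega), Nat.mod_eq_of_lt (by omega)]

lemma val_neg' (x : ZMod (2*t)) :
    (-x).val = if x.val = 0 then 0 else 2*t - x.val := by
  have hx := ZMod.val_lt x
  split_ifs with h
  · have : x = 0 := (ZMod.val_eq_zero x).mp h
    simp [this]
  · have : NeZero x := ⟨fun hx0 => h (by simp [hx0])⟩
    exact ZMod.val_neg_of_ne_zero x

lemma rho_rr (i j : ZMod (2*t)) :
    rhoD t (.r i) (.r j) = if i.val + j.val < 2*t then 1 else -1 := by
  have hi := ZMod.val_lt i; have hj := ZMod.val_lt j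
  simp only [rhoD, rhoIdxD, dihIdx]
  split_ifs <;> first | rfl | omega

lemma rho_rs (i n : ZMod (2*t)) :
    rhoD t (.r i) (.sr n) = if i.val + (-n).val < 2*t then 1 else -1 := by
  have hi := ZMod.val_lt i; have hn := ZMod.val_lt (-n)
  simp only [rhoD, rhoIdxD, dihIdx]
  split_ifs <;> first | rfl | omega

lemma rho_sr (m j : ZMod (2*t)) :
    rhoD t (.sr m) (.r j) = if j.val ≤ (-m).val then 1 else -1 := by
  have hm := ZMod.val_lt (-m); have hj := ZMod.val_lt j
  simp only [rhoD, rhoIdxD, dihIdx]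
  split_ifs <;> first | rfl | omega

lemma rho_ss (m n : ZMod (2*t)) :
    rhoD t (.sr m) (.sr n) = if (-n).val ≤ (-m).val then -1 else 1 := by
  have hm := ZMod.val_lt (-m); have hn := ZMod.val_lt (-n)
  simp only [rhoD, rhoIdxD, dihIdx]
  split_ifs <;> first | rfl | omega
set_option maxHeartbeats 1000000 in
lemma rho_cocycle (g h k : DihedralGroup (2*t)) :
    rhoD t g h * rhoD t (g*h) k = rhoD t h k * rhoD t g (h*k) := by
  obtain ⟨i⟩|⟨i⟩ := g <;> obtain ⟨j⟩|⟨j⟩ := h <;> obtain ⟨l⟩|⟨l⟩ := k <;>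
    simp only [r_mul_r, r_mul_sr, sr_mul_r, sr_mul_sr, rho_rr, rho_rs, rho_sr, rho_ss,
      sub_eq_add_neg, neg_add_rev, neg_neg, val_add', val_neg'] <;>
    (try have hi := ZMod.val_lt i) <;> (try have hj := ZMod.val_lt j) <;>
    (try have hl := ZMod.val_lt l) <;>
    split_ifs <;> first | rfl | omega | (exfalso; omega) | norm_num

lemma rho_flip_sr (n : ZMod (2*t)) (h : DihedralGroup (2*t)) :
    rhoD t (.sr n) (.sr n * h) = - rhoD t (.sr n) h := by
  obtain ⟨j⟩|⟨j⟩ := h <;>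
    simp only [sr_mul_r, sr_mul_sr, rho_rr, rho_rs, rho_sr, rho_ss,
      sub_eq_add_neg, neg_add_rev, neg_neg, val_add', val_neg'] <;>
    (try have hn := ZMod.val_lt n) <;> (try have hj := ZMod.val_lt j) <;>
    split_ifs <;> first | rfl | omega | norm_num

lemma rho_flip_t (hp : 0 < t) (h : DihedralGroup (2*t)) :
    rhoD t (.r (t : ZMod (2*t))) (.r (t : ZMod (2*t)) * h) = - rhoD t (.r (t : ZMod (2*t))) h := by
  have hv : ((t : ℕ) : ZMod (2*t)).val = t := by
    rw [ZMod.val_natCast]; exact Nat.mod_eq_of_lt (by omega)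
  obtain ⟨j⟩|⟨j⟩ := h <;>
    simp only [r_mul_r, r_mul_sr, rho_rr, rho_rs, rho_sr, rho_ss,
      sub_eq_add_neg, neg_add_rev, neg_neg, val_add', val_neg', hv] <;>
    (try have hj := ZMod.val_lt j) <;>
    split_ifs <;> first | rfl | omega | norm_num


lemma pm_aux {a b c d : ℤ} (ha : a*a = 1) (hc : c*c = 1) (h : a*b = c*d) : b*c = a*d := by
  have h1 : b*c = (a*a)*(b*c) := by rw [ha, one_mul]
  have h2 : (a*a)*(b*c) = (c*c)*(a*d) := by linear_combination a*c*h
  rw [h1, h2, hc, one_mul]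

lemma pm_aux2 {a b c d : ℤ} (hc : c*c = 1) (h : a*b = c*d) : a*b*c = d := by
  linear_combination c*h + d*hc

variable {G : Type*} [Group G] [Fintype G] [DecidableEq G]
variable (ψ : G → G → ℤ)

theorem psi_one_one (hsq : ∀ g h, ψ g h * ψ g h = 1)
    (hco : ∀ g h k, ψ g h * ψ (g*h) k = ψ h k * ψ g (h*k)) (h : G) : ψ 1 h = ψ 1 1 := by
  have h1 := hco 1 1 h
  rw [one_mul, one_mul] at h1
  have h2 := hsq 1 h
  nlinarith [hsq 1 1]

theorem sum_row_eq (hsq : ∀ g h, ψ g h * ψ g h = 1)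
    (hco : ∀ g h k, ψ g h * ψ (g*h) k = ψ h k * ψ g (h*k)) (g k : G) :
    ∑ h, ψ g h * ψ k h = ψ (g*k⁻¹) k * ∑ h, ψ (g*k⁻¹) h := by
  set u := g * k⁻¹ with hu
  have huk : u * k = g := by rw [hu, inv_mul_cancel_right]
  have key : ∀ h, ψ g h * ψ k h = ψ u k * ψ u (k*h) := by
    intro h
    have h1 := hco u k h
    rw [huk] at h1
    have := pm_aux (hsq u k) (hsq k h) h1
    linarith [this]
  rw [Finset.sum_congr rfl (fun h _ => key h), ← Finset.mul_sum]
  congr 1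
  exact Fintype.sum_equiv (Equiv.mulLeft k) _ _ (fun h => rfl)

theorem hadamard_test (hsq : ∀ g h, ψ g h * ψ g h = 1)
    (hco : ∀ g h k, ψ g h * ψ (g*h) k = ψ h k * ψ g (h*k)) :
    (Matrix.of ψ) * (Matrix.of ψ)ᵀ = (Fintype.card G : ℤ) • 1 ↔
      ∀ g : G, g ≠ 1 → ∑ h, ψ g h = 0 := by
  have hentry : ∀ g k, ((Matrix.of ψ) * (Matrix.of ψ)ᵀ) g k = ∑ h, ψ g h * ψ k h := by
    intro g k
    simp [Matrix.mul_apply, Matrix.transpose_apply]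
  constructor
  · intro hm g hg
    have h1 : ((Matrix.of ψ) * (Matrix.of ψ)ᵀ) g 1 = 0 := by
      rw [hm]
      simp [Matrix.one_apply, hg]
    rw [hentry, sum_row_eq ψ hsq hco g 1] at h1
    rw [inv_one, mul_one] at h1
    rcases mul_eq_zero.mp h1 with h2 | h2
    · exact absurd h2 (by rcases mul_self_eq_one_iff.mp (hsq g 1) with h|h <;> rw [h] <;> norm_num)
    · exact h2
  · intro hr
    ext g k
    rw [hentry, sum_row_eq ψ hsq hco g k]
    by_cases hgk : g = k
    · subst hgk
      rw [mul_inv_cancel]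
      have : ∑ h, ψ 1 h = (Fintype.card G : ℤ) * ψ 1 1 := by
        rw [Finset.sum_congr rfl (fun h _ => psi_one_one ψ hsq hco h)]
        simp [Finset.sum_const, mul_comm]
      rw [this, psi_one_one ψ hsq hco g]
      have := hsq 1 1
      have hrhs : ((Fintype.card G : ℤ) • (1 : Matrix G G ℤ)) g g = (Fintype.card G : ℤ) := by
        simp [Matrix.one_apply]
      rw [hrhs]; ring_nf; nlinarith [hsq 1 1]
    · have hu : g * k⁻¹ ≠ 1 := fun h => hgk (mul_inv_eq_one.mp h)
      rw [hr _ hu, mul_zero]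
      simp [Matrix.one_apply, hgk]

theorem sum_row_inv_eq_zero (hsq : ∀ g h, ψ g h * ψ g h = 1)
    (hco : ∀ g h k, ψ g h * ψ (g*h) k = ψ h k * ψ g (h*k)) (g : G)
    (h0 : ∑ h, ψ g h = 0) : ∑ h, ψ g⁻¹ h = 0 := by
  have key : ∀ k, ψ g⁻¹ k = (ψ g⁻¹ g * ψ 1 1) * ψ g (g⁻¹*k) := by
    intro k
    have h1 := hco g⁻¹ g (g⁻¹*k)
    rw [inv_mul_cancel] at h1
    have h2 : g * (g⁻¹ * k) = k := by group
    rw [h2, psi_one_one ψ hsq hco (g⁻¹*k)] at h1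
    exact (pm_aux2 (hsq g (g⁻¹*k)) h1).symm
  rw [Finset.sum_congr rfl (fun k _ => key k), ← Finset.mul_sum]
  have : ∑ k, ψ g (g⁻¹ * k) = ∑ h, ψ g h :=
    Fintype.sum_equiv (Equiv.mulLeft g⁻¹) _ _ (fun h => rfl)
  rw [this, h0, mul_zero]

theorem sum_row_flip_eq_zero (g : G) (hg : g * g = 1)
    (hflip : ∀ h, ψ g (g*h) = - ψ g h) : ∑ h, ψ g h = 0 := by
  have : ∑ h, ψ g h = ∑ h, ψ g (g*h) :=
    (Fintype.sum_equiv (Equiv.mulLeft g) _ _ (fun h => rfl)).symm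
  rw [Finset.sum_congr rfl (fun h _ => hflip h)] at this
  simp only [Finset.sum_neg_distrib] at this
  omega


def psiX (t : ℕ) [NeZero (2*t)] (x : {d : DihedralGroup (2 * t) // d ∈ SD t} → ℕ)
    (g h : DihedralGroup (2 * t)) : ℤ :=
  rhoD t g h * ∏ d : {d : DihedralGroup (2 * t) // d ∈ SD t},
    elemCob (d : DihedralGroup (2 * t)) g h ^ x d

lemma charMap_sq {G : Type*} [DecidableEq G] (d x : G) : charMap d x * charMap d x = 1 := by
  unfold charMap; split_ifs <;> norm_num

lemma elemCob_sq {G : Type*} [Group G] [DecidableEq G] (d g h : G) :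
    elemCob d g h * elemCob d g h = 1 := by
  unfold elemCob
  have h1 := charMap_sq d g; have h2 := charMap_sq d h; have h3 := charMap_sq d (g*h)
  linear_combination (charMap d h * charMap d (g*h))^2 * h1 + (charMap d (g*h))^2 * h2 + h3

lemma elemCob_cocycle {G : Type*} [Group G] [DecidableEq G] (d g h k : G) :
    elemCob d g h * elemCob d (g*h) k = elemCob d h k * elemCob d g (h*k) := by
  unfold elemCob
  rw [← mul_assoc g h k]
  have h1 := charMap_sq d (g*h); have h2 := charMap_sq d (h*k)
  linear_combination (charMap d g * charMap d h * charMap d k * charMap d (g*h*k)) * h1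
    - (charMap d g * charMap d h * charMap d k * charMap d (g*h*k)) * h2

lemma rho_sq {t : ℕ} (g h : DihedralGroup (2*t)) : rhoD t g h * rhoD t g h = 1 := by
  unfold rhoD rhoIdxD; split_ifs <;> norm_num


lemma psi_sq (x : {d : DihedralGroup (2 * t) // d ∈ SD t} → ℕ) (g h : DihedralGroup (2*t)) :
    psiX t x g h * psiX t x g h = 1 := by
  unfold psiX
  rw [mul_mul_mul_comm, rho_sq, ← Finset.prod_mul_distrib]
  simp_rw [← mul_pow, elemCob_sq, one_pow, Finset.prod_const_one, one_mul]

lemma psi_cocycle (x : {d : DihedralGroup (2 * t) // d ∈ SD t} → ℕ) (g h k : DihedralGroup (2*t)) :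
    psiX t x g h * psiX t x (g*h) k = psiX t x h k * psiX t x g (h*k) := by
  unfold psiX
  rw [mul_mul_mul_comm, rho_cocycle, ← Finset.prod_mul_distrib]
  have h1 : ∀ d : {d : DihedralGroup (2 * t) // d ∈ SD t},
      elemCob (d : DihedralGroup (2*t)) g h ^ x d * elemCob (d : DihedralGroup (2*t)) (g*h) k ^ x d
      = elemCob (d : DihedralGroup (2*t)) h k ^ x d * elemCob (d : DihedralGroup (2*t)) g (h*k) ^ x d := by
    intro d; rw [← mul_pow, ← mul_pow, elemCob_cocycle]
  rw [Finset.prod_congr rfl (fun d _ => h1 d), Finset.prod_mul_distrib, mul_mul_mul_comm]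

lemma psi_flip (x : {d : DihedralGroup (2 * t) // d ∈ SD t} → ℕ) (g : DihedralGroup (2*t))
    (hgg : g * g = 1) (hrf : ∀ h, rhoD t g (g*h) = - rhoD t g h) (h : DihedralGroup (2*t)) :
    psiX t x g (g*h) = - psiX t x g h := by
  unfold psiX
  have hgh : g * (g * h) = h := by rw [← mul_assoc, hgg, one_mul]
  have he : ∀ d : {d : DihedralGroup (2 * t) // d ∈ SD t},
      elemCob (d : DihedralGroup (2*t)) g (g*h) = elemCob (d : DihedralGroup (2*t)) g h := by
    intro d; unfold elemCob; rw [hgh]; ring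
  rw [Finset.prod_congr rfl (fun d _ => by rw [he d]), hrf, neg_mul]



lemma rows_reduce (ht : 2 < t) (x : {d : DihedralGroup (2 * t) // d ∈ SD t} → ℕ)
    (H : ∀ s : ℕ, 2 ≤ s → s ≤ t → ∑ h, psiX t x (dihEl t s) h = 0) :
    ∀ g : DihedralGroup (2*t), g ≠ 1 → ∑ h, psiX t x g h = 0 := by
  have hsq := psi_sq x
  have hco := psi_cocycle x
  have hr_small : ∀ m : ZMod (2*t), 1 ≤ m.val → m.val ≤ t - 1 →
      ∑ h, psiX t x (.r m) h = 0 := by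
    intro m h1 h2
    have hd : dihEl t (m.val + 1) = .r m := by
      unfold dihEl
      rw [if_pos (by have := ZMod.val_lt m; omega)]
      simp only [Nat.add_sub_cancel]
      exact congrArg _ (ZMod.natCast_rightInverse m)
    have hH := H (m.val + 1) (by omega) (by omega)
    rwa [hd] at hH
  intro g hg1
  obtain ⟨m⟩ | ⟨j⟩ := g
  · have hm0 : m.val ≠ 0 := fun h => hg1 (by
      rw [one_def]; exact congrArg _ ((ZMod.val_eq_zero m).mp h))
    have hmlt := ZMod.val_lt m
    rcases lt_trichotomy m.val t with hlt | heq | hgt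
    · exact hr_small m (by omega) (by omega)
    · have hm : m = ((t : ℕ) : ZMod (2*t)) := by
        rw [← ZMod.natCast_rightInverse m, heq]
      rw [hm]
      have hgg : (DihedralGroup.r ((t:ℕ) : ZMod (2*t))) * .r ((t:ℕ) : ZMod (2*t)) = 1 := by
        rw [r_mul_r, ← Nat.cast_add, show t + t = 2*t from by ring, ZMod.natCast_self, one_def]
      exact sum_row_flip_eq_zero _ _ hgg
        (fun h => psi_flip x _ hgg (rho_flip_t (by omega)) h)
    · have hv := val_neg' m
      rw [if_neg hm0] at hv
      have h1 : ∑ h, psiX t x (.r (-m)) h = 0 := hr_small (-m) (by omega) (by omega)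
      have h2 := sum_row_inv_eq_zero _ hsq hco _ h1
      have h3 : DihedralGroup.r m = (DihedralGroup.r (-m) : DihedralGroup (2*t))⁻¹ := by
        apply eq_inv_of_mul_eq_one_left
        rw [r_mul_r, add_neg_cancel, one_def]
      rwa [← h3] at h2
  · exact sum_row_flip_eq_zero _ _ (sr_mul_self j)
      (fun h => psi_flip x _ (sr_mul_self j) (rho_flip_sr j) h)



lemma cob_factor (g h : DihedralGroup (2*t)) (hg1 : g ≠ 1)
    (d : {d : DihedralGroup (2 * t) // d ∈ SD t}) (xd : ℕ) (hxd : xd = 0 ∨ xd = 1) :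
    ((elemCob (d : DihedralGroup (2*t)) g h : ℤ) : ℚ) ^ xd =
      ((charMap (d : DihedralGroup (2*t)) g : ℤ) : ℚ) ^ xd *
        (if (d : DihedralGroup (2*t)) = h ∨ (d : DihedralGroup (2*t)) = g * h
         then 1 - 2 * (xd : ℚ) else 1) := by
  have hne : h ≠ g * h := fun e => hg1 (mul_eq_right.mp e.symm)
  rcases hxd with h0 | h1
  · simp [h0]
  · subst h1
    simp only [pow_one, elemCob, Nat.cast_one]
    by_cases hdh : (d : DihedralGroup (2*t)) = h <;>
      by_cases hdgh : (d : DihedralGroup (2*t)) = g * h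
    · exact absurd (hdh.symm.trans hdgh) hne
    · rw [if_pos (Or.inl hdh)]
      rw [show charMap (d : DihedralGroup (2*t)) h = -1 from if_pos hdh.symm,
          show charMap (d : DihedralGroup (2*t)) (g*h) = 1 from if_neg (fun e => hdgh e.symm)]
      push_cast; ring
    · rw [if_pos (Or.inr hdgh)]
      rw [show charMap (d : DihedralGroup (2*t)) h = 1 from if_neg (fun e => hdh e.symm),
          show charMap (d : DihedralGroup (2*t)) (g*h) = -1 from if_pos hdgh.symm]
      push_cast; ring
    · rw [if_neg (by tauto)]
      rw [show charMap (d : DihedralGroup (2*t)) h = 1 from if_neg (fun e => hdh e.symm),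
          show charMap (d : DihedralGroup (2*t)) (g*h) = 1 from if_neg (fun e => hdgh e.symm)]
      push_cast; ring

lemma cg_sq (g : DihedralGroup (2*t)) (x : {d : DihedralGroup (2 * t) // d ∈ SD t} → ℕ) :
    (∏ d : {d : DihedralGroup (2 * t) // d ∈ SD t},
        ((charMap (d : DihedralGroup (2*t)) g : ℤ) : ℚ) ^ x d) *
      (∏ d : {d : DihedralGroup (2 * t) // d ∈ SD t},
        ((charMap (d : DihedralGroup (2*t)) g : ℤ) : ℚ) ^ x d) = 1 := by
  rw [← Finset.prod_mul_distrib]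
  have : ∀ d : {d : DihedralGroup (2 * t) // d ∈ SD t},
      ((charMap (d : DihedralGroup (2*t)) g : ℤ) : ℚ) ^ x d *
        ((charMap (d : DihedralGroup (2*t)) g : ℤ) : ℚ) ^ x d = 1 := by
    intro d
    rw [← mul_pow, ← Int.cast_mul, charMap_sq]
    norm_num
  rw [Finset.prod_congr rfl (fun d _ => this d), Finset.prod_const_one]

lemma eval_rowPolyD (x : {d : DihedralGroup (2 * t) // d ∈ SD t} → ℕ)
    (hx : ∀ d, x d = 0 ∨ x d = 1) (s : ℕ) (hg1 : dihEl t s ≠ 1) :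
    eval (fun d => (x d : ℚ)) (rowPolyD t s) =
      (∏ d : {d : DihedralGroup (2 * t) // d ∈ SD t},
          ((charMap (d : DihedralGroup (2*t)) (dihEl t s) : ℤ) : ℚ) ^ x d) *
        ((∑ h, psiX t x (dihEl t s) h : ℤ) : ℚ) := by
  set g := dihEl t s with hg
  set cg := ∏ d : {d : DihedralGroup (2 * t) // d ∈ SD t},
      ((charMap (d : DihedralGroup (2*t)) g : ℤ) : ℚ) ^ x d with hcg
  rw [rowPolyD, map_sum]
  push_cast
  rw [Finset.mul_sum]
  apply Finset.sum_congr rfl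
  intro h _
  rw [_root_.map_mul, eval_C, map_prod, ← hg]
  have hev : ∀ d : {d : DihedralGroup (2 * t) // d ∈ SD t},
      eval (fun d => (x d : ℚ))
        (if (d : DihedralGroup (2*t)) = h ∨ (d : DihedralGroup (2*t)) = g * h
         then 1 - 2 * MvPolynomial.X d else 1) =
      (if (d : DihedralGroup (2*t)) = h ∨ (d : DihedralGroup (2*t)) = g * h
         then 1 - 2 * (x d : ℚ) else 1) := by
    intro d
    split_ifs <;> simp
  rw [Finset.prod_congr rfl (fun d _ => hev d)]
  unfold psiX
  push_cast
  rw [Finset.prod_congr rfl (fun d _ => cob_factor g h hg1 d (x d) (hx d)),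
    Finset.prod_mul_distrib]
  have hsq := cg_sq (t := t) g x
  rw [← hcg]
  set P := ∏ d : {d : DihedralGroup (2 * t) // d ∈ SD t},
      (if (d : DihedralGroup (2*t)) = h ∨ (d : DihedralGroup (2*t)) = g * h
       then 1 - 2 * (x d : ℚ) else 1) with hP
  set r := ((rhoD t g h : ℤ) : ℚ) with hr
  linear_combination (- r * P) * hsq

lemma eval_rowPolyD_eq_zero_iff (x : {d : DihedralGroup (2 * t) // d ∈ SD t} → ℕ)
    (hx : ∀ d, x d = 0 ∨ x d = 1) (s : ℕ) (hg1 : dihEl t s ≠ 1) :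
    eval (fun d => (x d : ℚ)) (rowPolyD t s) = 0 ↔ ∑ h, psiX t x (dihEl t s) h = 0 := by
  rw [eval_rowPolyD x hx s hg1, mul_eq_zero]
  have hsq := cg_sq (t := t) (dihEl t s) x
  constructor
  · rintro (h | h)
    · rw [h, mul_zero] at hsq; norm_num at hsq
    · exact_mod_cast h
  · intro h; right; exact_mod_cast h



lemma dihEl_ne_one (ht : 2 < t) {s : ℕ} (hs2 : 2 ≤ s) (hst : s ≤ t) :
    dihEl t s ≠ 1 := by
  unfold dihEl
  rw [if_pos (by omega)]
  rw [one_def]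
  intro e
  have h1 : ((s - 1 : ℕ) : ZMod (2*t)) = 0 := by injection e
  have h2 : ((s - 1 : ℕ) : ZMod (2*t)).val = s - 1 := ZMod.val_cast_of_lt (by omega)
  rw [h1, ZMod.val_zero] at h2
  omega

lemma hadamard_iff (ht : 2 < t) (x : {d : DihedralGroup (2 * t) // d ∈ SD t} → ℕ)
    (hx : ∀ d, x d = 0 ∨ x d = 1) :
    (Matrix.of (psiX t x)) * (Matrix.of (psiX t x))ᵀ =
        (4 * t : ℤ) • (1 : Matrix (DihedralGroup (2 * t)) (DihedralGroup (2 * t)) ℤ) ↔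
      ∀ s : ℕ, 2 ≤ s → s ≤ t → eval (fun d => (x d : ℚ)) (rowPolyD t s) = 0 := by
  have hcard : ((Fintype.card (DihedralGroup (2*t)) : ℤ)) = (4 * t : ℤ) := by
    rw [DihedralGroup.card]; push_cast; ring
  rw [← hcard]
  rw [hadamard_test (psiX t x) (psi_sq x) (psi_cocycle x)]
  constructor
  · intro H s hs2 hst
    rw [eval_rowPolyD_eq_zero_iff x hx s (dihEl_ne_one ht hs2 hst)]
    exact H _ (dihEl_ne_one ht hs2 hst)
  · intro H g hg
    refine rows_reduce ht x (fun s hs2 hst => ?_) g hg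
    rw [← eval_rowPolyD_eq_zero_iff x hx s (dihEl_ne_one ht hs2 hst)]
    exact H s hs2 hst


namespace HadAux
variable {σ : Type*} [Fintype σ] [DecidableEq σ]

noncomputable def eQ (q : Finset σ) : MvPolynomial σ ℚ :=
  (∏ d ∈ q, X d) * ∏ d ∈ qᶜ, (1 - X d)

def qv (q : Finset σ) : σ → ℚ := fun d => if d ∈ q then 1 else 0

/-- The boolean ideal. -/
noncomputable def J0 (σ : Type*) [Fintype σ] [DecidableEq σ] : Ideal (MvPolynomial σ ℚ) :=
  Ideal.span {p : MvPolynomial σ ℚ | ∃ d, p = X d ^ 2 - X d}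

lemma sum_eQ : ∑ q : Finset σ, eQ q = 1 := by
  have h := (Fintype.prod_add (fun d : σ => (X d : MvPolynomial σ ℚ)) (fun d => 1 - X d)).symm
  have h2 : ∀ d : σ, (X d : MvPolynomial σ ℚ) + (1 - X d) = 1 := fun d => by ring
  rw [Finset.prod_congr rfl (fun d _ => h2 d), Finset.prod_const_one] at h
  exact h.symm ▸ rfl

lemma K3 (q : Finset σ) (i : σ) : eQ q * X i - qv q i • eQ q ∈ J0 σ := by
  have hgen : (X i ^ 2 - X i : MvPolynomial σ ℚ) ∈ J0 σ := Ideal.subset_span ⟨i, rfl⟩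
  by_cases hi : i ∈ q
  · have hsplit : eQ q = X i * ((∏ d ∈ q.erase i, X d) * ∏ d ∈ qᶜ, (1 - X d)) := by
      rw [eQ, ← Finset.mul_prod_erase q _ hi, mul_assoc]
    have : eQ q * X i - qv q i • eQ q =
        (X i ^ 2 - X i) * ((∏ d ∈ q.erase i, X d) * ∏ d ∈ qᶜ, (1 - X d)) := by
      rw [qv, if_pos hi, one_smul]
      rw [hsplit]; ring
    rw [this]
    exact Ideal.mul_mem_right _ _ hgen
  · have hi' : i ∈ qᶜ := Finset.mem_compl.mpr hi
    have hsplit : eQ q = (∏ d ∈ q, X d) * ((1 - X i) * ∏ d ∈ qᶜ.erase i, (1 - X d)) := by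
      rw [eQ, ← Finset.mul_prod_erase qᶜ _ hi']
    have : eQ q * X i - qv q i • eQ q =
        (X i ^ 2 - X i) * (-((∏ d ∈ q, X d) * ∏ d ∈ qᶜ.erase i, (1 - X d))) := by
      rw [qv, if_neg hi, zero_smul, sub_zero]
      rw [hsplit]; ring
    rw [this]
    exact Ideal.mul_mem_right _ _ hgen

lemma K5 (f : MvPolynomial σ ℚ) (q : Finset σ) :
    f * eQ q - eval (qv q) f • eQ q ∈ J0 σ := by
  induction f using MvPolynomial.induction_on with
  | C a =>
    have : (C a : MvPolynomial σ ℚ) * eQ q - eval (qv q) (C a) • eQ q = 0 := by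
      rw [eval_C, smul_eq_C_mul, sub_self]
    rw [this]; exact zero_mem _
  | add p p' hp hp' =>
    have : (p + p') * eQ q - eval (qv q) (p + p') • eQ q =
        (p * eQ q - eval (qv q) p • eQ q) + (p' * eQ q - eval (qv q) p' • eQ q) := by
      rw [map_add, add_smul]; ring
    rw [this]; exact add_mem hp hp'
  | mul_X p i hp =>
    have : (p * X i) * eQ q - eval (qv q) (p * X i) • eQ q =
        X i * (p * eQ q - eval (qv q) p • eQ q) +
          C (eval (qv q) p) * (eQ q * X i - qv q i • eQ q) := by
      simp only [smul_eq_C_mul, _root_.map_mul, eval_X, _root_.map_mul]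
      ring
    rw [this]
    exact add_mem (Ideal.mul_mem_left _ _ hp)
      (Ideal.mul_mem_left _ _ (K3 q i))

lemma K (f : MvPolynomial σ ℚ) :
    f - ∑ q : Finset σ, eval (qv q) f • eQ q ∈ J0 σ := by
  have : f - ∑ q : Finset σ, eval (qv q) f • eQ q =
      ∑ q : Finset σ, (f * eQ q - eval (qv q) f • eQ q) := by
    rw [Finset.sum_sub_distrib, ← Finset.mul_sum, sum_eQ, mul_one]
  rw [this]
  exact Ideal.sum_mem _ (fun q _ => K5 f q)

lemma eval_eQ (q r : Finset σ) : eval (qv r) (eQ q) = if q = r then 1 else 0 := by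
  rw [eQ, _root_.map_mul, map_prod, map_prod]
  split_ifs with h
  · subst h
    have h1 : ∀ d ∈ q, eval (qv q) (X d : MvPolynomial σ ℚ) = 1 := by
      intro d hd; rw [eval_X, qv, if_pos hd]
    have h2 : ∀ d ∈ qᶜ, eval (qv q) (1 - X d : MvPolynomial σ ℚ) = 1 := by
      intro d hd; rw [map_sub, _root_.map_one, eval_X, qv, if_neg (Finset.mem_compl.mp hd)]; ring
    rw [Finset.prod_congr rfl h1, Finset.prod_congr rfl h2]; simp
  · have : ∃ d, (d ∈ q ∧ d ∉ r) ∨ (d ∈ r ∧ d ∉ q) := by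
      by_contra hc
      push_neg at hc
      exact h (Finset.ext fun a => ⟨(hc a).1, (hc a).2⟩)
    obtain ⟨d, ⟨hdq, hdr⟩ | ⟨hdr, hdq⟩⟩ := this
    · apply mul_eq_zero_of_left
      apply Finset.prod_eq_zero hdq
      rw [eval_X, qv, if_neg hdr]
    · apply mul_eq_zero_of_right
      apply Finset.prod_eq_zero (Finset.mem_compl.mpr hdq)
      rw [map_sub, _root_.map_one, eval_X, qv, if_pos hdr]; ring
end HadAux


namespace HadAux
variable {σ : Type*} [Fintype σ] [DecidableEq σ]

lemma aeval_eq (f : σ → ℚ) (p : MvPolynomial σ ℚ) : aeval f p = eval f p := by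
  have h := MvPolynomial.coe_aeval_eq_eval (f := f)
  exact DFunLike.congr_fun h p

noncomputable def Phi (P : Set (MvPolynomial σ ℚ)) :
    MvPolynomial σ ℚ →ₐ[ℚ] ({q : Finset σ // ∀ f ∈ P, eval (qv q) f = 0} → ℚ) :=
  Pi.algHom _ _ (fun v => MvPolynomial.aeval (qv v.1))

lemma Phi_apply (P : Set (MvPolynomial σ ℚ)) (p : MvPolynomial σ ℚ)
    (v : {q : Finset σ // ∀ f ∈ P, eval (qv q) f = 0}) :
    Phi P p v = eval (qv v.1) p := by
  simp [Phi, aeval_eq]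

lemma Phi_surjective (P : Set (MvPolynomial σ ℚ)) : Function.Surjective (Phi P) := by
  classical
  intro u
  refine ⟨∑ q : Finset σ, (if h : ∀ f ∈ P, eval (qv q) f = 0 then u ⟨q, h⟩ else 0) • eQ q, ?_⟩
  funext v
  rw [map_sum, Finset.sum_apply]
  have : ∀ q : Finset σ,
      Phi P ((if h : ∀ f ∈ P, eval (qv q) f = 0 then u ⟨q, h⟩ else 0) • eQ q) v =
      (if h : ∀ f ∈ P, eval (qv q) f = 0 then u ⟨q, h⟩ else 0) * (if q = v.1 then 1 else 0) := by
    intro q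
    rw [Phi_apply, smul_eq_C_mul, _root_.map_mul, eval_C, eval_eQ]
  rw [Finset.sum_congr rfl (fun q _ => this q)]
  simp only [mul_ite, mul_one, mul_zero]
  rw [Finset.sum_ite_eq' Finset.univ v.1
      (fun q => if h : ∀ f ∈ P, eval (qv q) f = 0 then u ⟨q, h⟩ else 0)]
  rw [if_pos (Finset.mem_univ _), dif_pos v.2]

lemma ker_Phi (P : Set (MvPolynomial σ ℚ)) :
    RingHom.ker (Phi P) = Ideal.span ({p : MvPolynomial σ ℚ | ∃ d, p = X d ^ 2 - X d} ∪ P) := by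
  classical
  apply le_antisymm
  · intro p hp
    have h0 : J0 σ ≤ Ideal.span ({p : MvPolynomial σ ℚ | ∃ d, p = X d ^ 2 - X d} ∪ P) := by
      rw [J0]; exact Ideal.span_mono Set.subset_union_left
    have hrepr : p = (p - ∑ q : Finset σ, eval (qv q) p • eQ q) +
        ∑ q : Finset σ, eval (qv q) p • eQ q := by ring
    rw [hrepr]
    refine Ideal.add_mem _ (h0 (K p)) (Ideal.sum_mem _ ?_)
    intro q _
    by_cases hq : ∀ f ∈ P, eval (qv q) f = 0
    · have hz : eval (qv q) p = 0 := by
        have h1 : Phi P p = 0 := hp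
        have h2 := congrFun h1 ⟨q, hq⟩
        rwa [Phi_apply, Pi.zero_apply] at h2
      rw [hz, zero_smul]; exact zero_mem _
    · push_neg at hq
      obtain ⟨f, hfP, hf0⟩ := hq
      have h1 : f * eQ q ∈ Ideal.span ({p : MvPolynomial σ ℚ | ∃ d, p = X d ^ 2 - X d} ∪ P) :=
        Ideal.mul_mem_right _ _ (Ideal.subset_span (Or.inr hfP))
      have h2 := h0 (K5 f q)
      have h3 : eval (qv q) f • eQ q ∈
          Ideal.span ({p : MvPolynomial σ ℚ | ∃ d, p = X d ^ 2 - X d} ∪ P) := by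
        have := sub_mem h1 h2; simpa using this
      have h4 : eQ q ∈ Ideal.span ({p : MvPolynomial σ ℚ | ∃ d, p = X d ^ 2 - X d} ∪ P) := by
        have he : eQ q = C (eval (qv q) f)⁻¹ * (eval (qv q) f • eQ q) := by
          rw [smul_eq_C_mul, ← mul_assoc, ← C_mul, inv_mul_cancel₀ hf0, C_1, one_mul]
        rw [he]
        exact Ideal.mul_mem_left _ _ h3
      rw [smul_eq_C_mul]; exact Ideal.mul_mem_left _ _ h4
  · rw [Ideal.span_le]
    rintro p (⟨d, rfl⟩ | hP)
    · rw [SetLike.mem_coe, RingHom.mem_ker]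
      funext v
      rw [Phi_apply, Pi.zero_apply, map_sub, map_pow, eval_X]
      rw [qv]
      split_ifs <;> norm_num
    · rw [SetLike.mem_coe, RingHom.mem_ker]
      funext v
      rw [Phi_apply, Pi.zero_apply]
      exact v.2 p hP

theorem finrank_eq_card (P : Set (MvPolynomial σ ℚ)) :
    Module.finrank ℚ (MvPolynomial σ ℚ ⧸
        Ideal.span ({p : MvPolynomial σ ℚ | ∃ d, p = X d ^ 2 - X d} ∪ P)) =
      Nat.card {q : Finset σ // ∀ f ∈ P, eval (qv q) f = 0} := by
  classical
  rw [← ker_Phi P]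
  have e1 := Ideal.quotientKerAlgEquivOfSurjective (Phi_surjective P)
  rw [e1.toLinearEquiv.finrank_eq]
  have : Fintype {q : Finset σ // ∀ f ∈ P, eval (qv q) f = 0} := Fintype.ofFinite _
  rw [Module.finrank_fintype_fun_eq_card, Nat.card_eq_fintype_card]

end HadAux

end MyAux

/-- the number of `{0,1}`-tuples whose associated cocyclic matrix over
`D_{4t}` is Hadamard equals `dim_ℚ (ℚ[x_d : d ∈ S]/J_{D_{4t}})`. -/
theorem card_hadamard_tuples_D_eq_finrank (t : ℕ) [NeZero (2 * t)] (ht : 2 < t) :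
    Nat.card {x : {d : DihedralGroup (2 * t) // d ∈ SD t} → ℕ //
        (∀ d, x d = 0 ∨ x d = 1) ∧
        (Matrix.of fun g h : DihedralGroup (2 * t) =>
              rhoD t g h *
                ∏ d : {d : DihedralGroup (2 * t) // d ∈ SD t},
                  elemCob (d : DihedralGroup (2 * t)) g h ^ x d) *
            (Matrix.of fun g h : DihedralGroup (2 * t) =>
              rhoD t g h *
                ∏ d : {d : DihedralGroup (2 * t) // d ∈ SD t},
                  elemCob (d : DihedralGroup (2 * t)) g h ^ x d)ᵀ =
          (4 * t : ℤ) • (1 : Matrix (DihedralGroup (2 * t)) (DihedralGroup (2 * t)) ℤ)} =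
      Module.finrank ℚ
        (MvPolynomial {d : DihedralGroup (2 * t) // d ∈ SD t} ℚ ⧸ idealD t) := by
  classical
  set σt := {d : DihedralGroup (2 * t) // d ∈ SD t}
  set P : Set (MvPolynomial σt ℚ) := {p | ∃ s : ℕ, 2 ≤ s ∧ s ≤ t ∧ p = rowPolyD t s} with hP
  rw [idealD, HadAux.finrank_eq_card]
  -- key condition translation
  have cond_iff : ∀ (x : σt → ℕ), (∀ d, x d = 0 ∨ x d = 1) →
      ((Matrix.of fun g h : DihedralGroup (2 * t) =>
              rhoD t g h * ∏ d : σt, elemCob (d : DihedralGroup (2 * t)) g h ^ x d) *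
          (Matrix.of fun g h : DihedralGroup (2 * t) =>
              rhoD t g h * ∏ d : σt, elemCob (d : DihedralGroup (2 * t)) g h ^ x d)ᵀ =
          (4 * t : ℤ) • (1 : Matrix (DihedralGroup (2 * t)) (DihedralGroup (2 * t)) ℤ)
        ↔ ∀ f ∈ P, eval (HadAux.qv (Finset.univ.filter (fun d => x d = 1))) f = 0) := by
    intro x hx
    have hqv : HadAux.qv (Finset.univ.filter (fun d : σt => x d = 1)) =
        fun d => ((x d : ℚ)) := by
      funext d
      rw [HadAux.qv]
      rcases hx d with h | h <;> simp [h]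
    have h1 : (Matrix.of (psiX t x)) * (Matrix.of (psiX t x))ᵀ =
          (4 * t : ℤ) • (1 : Matrix (DihedralGroup (2 * t)) (DihedralGroup (2 * t)) ℤ)
        ↔ ∀ s : ℕ, 2 ≤ s → s ≤ t → eval (fun d => (x d : ℚ)) (rowPolyD t s) = 0 :=
      hadamard_iff ht x hx
    rw [hqv]
    constructor
    · intro hm f hf
      obtain ⟨s, hs2, hst, rfl⟩ := hf
      exact (h1.mp hm) s hs2 hst
    · intro hev
      exact h1.mpr (fun s hs2 hst => hev (rowPolyD t s) ⟨s, hs2, hst, rfl⟩)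
  have hfilt : ∀ q : Finset σt,
      Finset.univ.filter (fun d => (if d ∈ q then (1:ℕ) else 0) = 1) = q := by
    intro q
    ext d
    by_cases h : d ∈ q <;> simp [h]
  have hx01 : ∀ (q : Finset σt) (d : σt),
      (if d ∈ q then (1:ℕ) else 0) = 0 ∨ (if d ∈ q then (1:ℕ) else 0) = 1 := by
    intro q d; split_ifs <;> simp
  apply Nat.card_congr
  exact
    { toFun := fun x => ⟨Finset.univ.filter (fun d => x.1 d = 1),
        (cond_iff x.1 x.2.1).mp x.2.2⟩
      invFun := fun q => ⟨fun d => if d ∈ q.1 then 1 else 0,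
        hx01 q.1,
        (cond_iff _ (hx01 q.1)).mpr (by rw [hfilt q.1]; exact q.2)⟩
      left_inv := by
        rintro ⟨x, hx, hm⟩
        apply Subtype.ext
        funext d
        simp only
        rcases hx d with h | h <;> simp [h]
      right_inv := by
        rintro ⟨q, hq⟩
        apply Subtype.ext
        simp only
        exact hfilt q }
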